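/- Fix L, P, T > 0. Define E(δ) for an admissible discretization δ = (h, t, ρ) with t = cumulative sums of h, t_n = T, ‖h‖_∞ ≤ 1/(4L), ‖ρ‖_∞ ≤ P/(8L), and ρ_j = 2LP h_j² for j ≥ 1, by E(δ) = (ρ_0/2)e^{LT} + Σ_{k=1}^n e^{L(T−t_k)}[(e^{Lh_k}−1)(Ph_k + ((1+Lh_k)²/(Lh_k))(ρ_{k−1}/2)) + χ_k], where χ_k = ρ_k/2 if ρ_{k−1} < ρ_k and 0 otherwise. Then E(δ) ≤ ω_1(‖ρ‖_∞) where ω_1(s) = (1/2)e^{LT}s + (1/√2)Te^{LT}√(LPs) + e^{4LT}(s + T√(2LPs)); in particular E(δ) → 0 uniformly as ‖ρ‖_∞ → 0. -/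

import Mathlib

set_option maxHeartbeats 1000000


/-- temporal nodes: t_k = h_1 + ... + h_k (0-based steps h 0,...,h (n-1)). -/
noncomputable def tnode (h : ℕ → ℝ) (k : ℕ) : ℝ := ∑ j ∈ Finset.range k, h j

/-- A priori error bound E(δ) of the nonuniform set-valued Euler scheme.
Index k of the sum ranges over 0,...,n-1 and represents the paper's step k+1,
so h k = h_{k+1}, ρ k = ρ_k, and χ_{k+1} compares ρ_k with ρ_{k+1}. -/
noncomputable def Eerr (L P T : ℝ) (n : ℕ) (h ρ : ℕ → ℝ) : ℝ :=
  ρ 0 / 2 * Real.exp (L*T) +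
    ∑ k ∈ Finset.range n,
      Real.exp (L*(T - tnode h (k+1))) *
        ((Real.exp (L * h k) - 1) * (P * h k + ((1 + L * h k)^2 / (L * h k)) * (ρ k / 2))
          + (if ρ k < ρ (k+1) then ρ (k+1) / 2 else 0))

theorem Eerr_le_omega1 (L P T : ℝ) (hL : 0 < L) (hP : 0 < P) (hT : 0 < T)
    (n : ℕ) (hn : 1 ≤ n) (h ρ : ℕ → ℝ)
    (hpos : ∀ j < n, 0 < h j) (hsum : ∑ j ∈ Finset.range n, h j = T)
    (hbd : ∀ j < n, h j ≤ 1/(4*L))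
    (ρpos : ∀ k ≤ n, 0 < ρ k) (ρbd : ∀ k ≤ n, ρ k ≤ P/(8*L))
    (coupling : ∀ j < n, ρ (j+1) = 2*L*P*(h j)^2) :
    Eerr L P T n h ρ ≤
      (1/2) * Real.exp (L*T) * ((Finset.range (n+1)).sup' ⟨0, by simp⟩ ρ)
        + (1/Real.sqrt 2) * T * Real.exp (L*T) *
            Real.sqrt (L*P*((Finset.range (n+1)).sup' ⟨0, by simp⟩ ρ))
        + Real.exp (4*L*T) *
            (((Finset.range (n+1)).sup' ⟨0, by simp⟩ ρ)
              + T * Real.sqrt (2*L*P*((Finset.range (n+1)).sup' ⟨0, by simp⟩ ρ))) := by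
  set R : ℝ := (Finset.range (n+1)).sup' ⟨0, by simp⟩ ρ with hR
  set S : ℝ := Real.sqrt (2*L*P*R) with hSdef
  have hρR : ∀ k ≤ n, ρ k ≤ R := fun k hk =>
    Finset.le_sup' ρ (Finset.mem_range.mpr (Nat.lt_succ_of_le hk))
  have hRpos : 0 < R := lt_of_lt_of_le (ρpos 0 (Nat.zero_le n)) (hρR 0 (Nat.zero_le n))
  have hSnn : 0 ≤ S := Real.sqrt_nonneg _
  have hSsq : S^2 = 2*L*P*R := Real.sq_sqrt (by positivity)
  -- key pointwise bound: L*P*(h k)^2 ≤ S/2 * h k for k < n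
  have hkey : ∀ k < n, L*P*(h k)^2 ≤ S/2 * h k := by
    intro k hk
    have hhk : 0 < h k := hpos k hk
    have h1 : 2*L*P*(h k)^2 ≤ R := (coupling k hk) ▸ hρR (k+1) hk
    have h2 : (2*L*P*(h k))^2 ≤ S^2 := by rw [hSsq]; nlinarith
    have h3 : 2*L*P*(h k) ≤ S := by
      have := Real.sqrt_le_sqrt h2
      rwa [Real.sqrt_sq (by positivity), Real.sqrt_sq hSnn] at this
    nlinarith
  have hhT : ∀ k < n, h k ≤ T := by
    intro k hk
    rw [← hsum]
    exact Finset.single_le_sum (fun j hj => (hpos j (Finset.mem_range.mp hj)).le)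
      (Finset.mem_range.mpr hk)
  -- termwise bound
  have hterm : ∀ k ∈ Finset.range n,
      Real.exp (L*(T - tnode h (k+1))) *
        ((Real.exp (L * h k) - 1) * (P * h k + ((1 + L * h k)^2 / (L * h k)) * (ρ k / 2))
          + (if ρ k < ρ (k+1) then ρ (k+1) / 2 else 0))
      ≤ Real.exp (L*T) * (S/2 * h k) + Real.exp (4*L*T) * (S/2 * h k + ρ k / 2) := by
    intro k hkmem
    have hk : k < n := Finset.mem_range.mp hkmem
    have hhk : 0 < h k := hpos k hk
    set x : ℝ := L * h k with hxdef
    have hx : 0 < x := by positivity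
    have htk0 : 0 ≤ tnode h k := Finset.sum_nonneg fun j hj =>
      (hpos j (lt_of_lt_of_le (Finset.mem_range.mp hj) hk.le)).le
    have htk1 : tnode h (k+1) = tnode h k + h k := Finset.sum_range_succ h k
    have htkT : tnode h (k+1) ≤ T := by
      rw [← hsum]
      exact Finset.sum_le_sum_of_subset_of_nonneg
        (Finset.range_subset_range.mpr hk) (fun j hj _ => (hpos j (Finset.mem_range.mp hj)).le)
    set A : ℝ := Real.exp (L*(T - tnode h (k+1))) with hAdef
    have hApos : 0 < A := Real.exp_pos _
    have hA1 : A * Real.exp x ≤ Real.exp (L*T) := by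
      rw [hAdef, ← Real.exp_add]
      apply Real.exp_le_exp.mpr
      rw [hxdef]; nlinarith [htk0, htk1]
    have hA4 : A * (Real.exp x)^3 ≤ Real.exp (4*L*T) := by
      rw [hAdef, show (Real.exp x)^3 = Real.exp (3*x) by rw [← Real.exp_nat_mul]; norm_num,
        ← Real.exp_add]
      apply Real.exp_le_exp.mpr
      have := hhT k hk
      rw [hxdef]; nlinarith [htk0, htk1, mul_pos hL hT]
    have hA0 : A ≤ Real.exp (4*L*T) := by
      rw [hAdef]
      apply Real.exp_le_exp.mpr
      nlinarith [htkT, mul_pos hL hT]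
    have hEX1 : 1 ≤ Real.exp x := Real.one_le_exp hx.le
    have hb1 : Real.exp x - 1 ≤ x * Real.exp x := by
      have h0 : 1 - x ≤ Real.exp (-x) := by linarith [Real.add_one_le_exp (-x)]
      have h1 : (1 - x) * Real.exp x ≤ 1 := by
        have := mul_le_mul_of_nonneg_right h0 (Real.exp_pos x).le
        rwa [Real.exp_neg, inv_mul_cancel₀ (Real.exp_ne_zero x)] at this
      nlinarith
    have hb2 : (1 + x)^2 ≤ (Real.exp x)^2 := by
      have := Real.add_one_le_exp x
      nlinarith
    have h3 : (Real.exp x - 1) * ((1 + x)^2 / x) ≤ (Real.exp x)^3 := by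
      rw [mul_div_assoc', div_le_iff₀ hx]
      have e1 : (Real.exp x - 1) * (1 + x)^2 ≤ x * Real.exp x * (1 + x)^2 :=
        mul_le_mul_of_nonneg_right hb1 (sq_nonneg _)
      have e2 : x * Real.exp x * (1 + x)^2 ≤ x * Real.exp x * (Real.exp x)^2 :=
        mul_le_mul_of_nonneg_left hb2 (by positivity)
      have e3 : x * Real.exp x * (Real.exp x)^2 = (Real.exp x)^3 * x := by ring
      linarith
    have hρk : 0 < ρ k := ρpos k hk.le
    have hχ : (if ρ k < ρ (k+1) then ρ (k+1) / 2 else 0) ≤ L*P*(h k)^2 := by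
      split
      · rw [coupling k hk]; nlinarith
      · positivity
    have hkeyk := hkey k hk
    -- assemble
    have part1 : A * ((Real.exp x - 1) * (P * h k)) ≤ Real.exp (L*T) * (S/2 * h k) := by
      have e1 : A * (Real.exp x - 1) ≤ A * (x * Real.exp x) :=
        mul_le_mul_of_nonneg_left hb1 hApos.le
      have e2 : A * (x * Real.exp x) * (P * h k) = (A * Real.exp x) * (L*P*(h k)^2) := by
        rw [hxdef]; ring
      have e3 : A * ((Real.exp x - 1) * (P * h k)) ≤ (A * Real.exp x) * (L*P*(h k)^2) := by
        rw [← e2, ← mul_assoc]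
        exact mul_le_mul_of_nonneg_right e1 (by positivity)
      calc A * ((Real.exp x - 1) * (P * h k)) ≤ (A * Real.exp x) * (L*P*(h k)^2) := e3
        _ ≤ Real.exp (L*T) * (L*P*(h k)^2) :=
            mul_le_mul_of_nonneg_right hA1 (by positivity)
        _ ≤ Real.exp (L*T) * (S/2 * h k) :=
            mul_le_mul_of_nonneg_left hkeyk (Real.exp_pos _).le
    have part2 : A * ((Real.exp x - 1) * (((1 + x)^2 / x) * (ρ k / 2)))
        ≤ Real.exp (4*L*T) * (ρ k / 2) := by
      have e1 : (Real.exp x - 1) * (((1 + x)^2 / x) * (ρ k / 2))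
          ≤ (Real.exp x)^3 * (ρ k / 2) := by
        rw [← mul_assoc]
        exact mul_le_mul_of_nonneg_right h3 (by positivity)
      calc A * ((Real.exp x - 1) * (((1 + x)^2 / x) * (ρ k / 2)))
          ≤ A * ((Real.exp x)^3 * (ρ k / 2)) := mul_le_mul_of_nonneg_left e1 hApos.le
        _ = (A * (Real.exp x)^3) * (ρ k / 2) := by ring
        _ ≤ Real.exp (4*L*T) * (ρ k / 2) :=
            mul_le_mul_of_nonneg_right hA4 (by positivity)
    have part3 : A * (if ρ k < ρ (k+1) then ρ (k+1) / 2 else 0)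
        ≤ Real.exp (4*L*T) * (S/2 * h k) := by
      calc A * (if ρ k < ρ (k+1) then ρ (k+1) / 2 else 0)
          ≤ A * (L*P*(h k)^2) := mul_le_mul_of_nonneg_left hχ hApos.le
        _ ≤ Real.exp (4*L*T) * (L*P*(h k)^2) :=
            mul_le_mul_of_nonneg_right hA0 (by positivity)
        _ ≤ Real.exp (4*L*T) * (S/2 * h k) :=
            mul_le_mul_of_nonneg_left hkeyk (Real.exp_pos _).le
    have expand : A *
        ((Real.exp (L * h k) - 1) * (P * h k + ((1 + L * h k)^2 / (L * h k)) * (ρ k / 2))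
          + (if ρ k < ρ (k+1) then ρ (k+1) / 2 else 0))
        = A * ((Real.exp x - 1) * (P * h k))
          + A * ((Real.exp x - 1) * (((1 + x)^2 / x) * (ρ k / 2)))
          + A * (if ρ k < ρ (k+1) then ρ (k+1) / 2 else 0) := by
      rw [hxdef]; ring
    rw [hAdef] at expand
    rw [expand]
    linarith [part1, part2, part3]
  -- sum up
  have hsum1 : ∑ k ∈ Finset.range n,
      (Real.exp (L*T) * (S/2 * h k) + Real.exp (4*L*T) * (S/2 * h k + ρ k / 2))
      = Real.exp (L*T) * (S/2 * T) + Real.exp (4*L*T) * (S/2 * T)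
        + Real.exp (4*L*T) * (∑ k ∈ Finset.range n, ρ k / 2) := by
    rw [Finset.sum_add_distrib]
    have hA : ∑ k ∈ Finset.range n, Real.exp (L*T) * (S/2 * h k)
        = Real.exp (L*T) * (S/2 * T) := by
      rw [← Finset.mul_sum, ← Finset.mul_sum, hsum]
    have hB : ∑ k ∈ Finset.range n, Real.exp (4*L*T) * (S/2 * h k + ρ k / 2)
        = Real.exp (4*L*T) * (S/2 * T)
          + Real.exp (4*L*T) * (∑ k ∈ Finset.range n, ρ k / 2) := by
      rw [← Finset.mul_sum, Finset.sum_add_distrib, ← Finset.mul_sum, hsum, mul_add]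
    rw [hA, hB]; ring
  have hρsum : ∑ k ∈ Finset.range n, ρ k / 2 ≤ R/2 + S/2 * T := by
    obtain ⟨m, rfl⟩ : ∃ m, n = m + 1 := ⟨n - 1, (Nat.succ_pred_eq_of_pos hn).symm⟩
    rw [Finset.sum_range_succ' (fun k => ρ k / 2) m]
    have e1 : ∑ j ∈ Finset.range m, ρ (j+1) / 2 ≤ ∑ j ∈ Finset.range m, S/2 * h j := by
      apply Finset.sum_le_sum
      intro j hj
      have hjm : j < m + 1 := Nat.lt_succ_of_lt (Finset.mem_range.mp hj)
      rw [coupling j hjm]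
      have := hkey j hjm
      nlinarith
    have e2 : ∑ j ∈ Finset.range m, S/2 * h j ≤ ∑ j ∈ Finset.range (m+1), S/2 * h j := by
      apply Finset.sum_le_sum_of_subset_of_nonneg
        (Finset.range_subset_range.mpr (Nat.le_succ m))
      intro j hj _
      have := hpos j (Finset.mem_range.mp hj)
      positivity
    have e3 : ∑ j ∈ Finset.range (m+1), S/2 * h j = S/2 * T := by
      rw [← Finset.mul_sum, hsum]
    have e4 : ρ 0 / 2 ≤ R/2 := by linarith [hρR 0 (Nat.zero_le _)]
    linarith
  -- combine
  have hE : Eerr L P T n h ρ ≤ ρ 0 / 2 * Real.exp (L*T)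
      + (Real.exp (L*T) * (S/2 * T) + Real.exp (4*L*T) * (S/2 * T)
        + Real.exp (4*L*T) * (∑ k ∈ Finset.range n, ρ k / 2)) := by
    rw [Eerr, ← hsum1]
    exact add_le_add_right (Finset.sum_le_sum hterm) _
  -- final numeric comparison
  have hSval : (1/Real.sqrt 2) * Real.sqrt (L*P*R) = S/2 := by
    have h2 : Real.sqrt 2 * Real.sqrt 2 = 2 := Real.mul_self_sqrt (by norm_num)
    have hs2 : (0:ℝ) < Real.sqrt 2 := Real.sqrt_pos.mpr (by norm_num)
    rw [hSdef, show 2*L*P*R = 2*(L*P*R) by ring,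
      Real.sqrt_mul (by norm_num : (0:ℝ) ≤ 2)]
    field_simp
    linear_combination (-1 : ℝ) * (Real.sq_sqrt (by norm_num : (0:ℝ) ≤ 2))
  have hexp4 : 0 < Real.exp (4*L*T) := Real.exp_pos _
  have hexp1 : 0 < Real.exp (L*T) := Real.exp_pos _
  have hρ0 : ρ 0 ≤ R := hρR 0 (Nat.zero_le _)
  calc Eerr L P T n h ρ
      ≤ ρ 0 / 2 * Real.exp (L*T)
        + (Real.exp (L*T) * (S/2 * T) + Real.exp (4*L*T) * (S/2 * T)
          + Real.exp (4*L*T) * (∑ k ∈ Finset.range n, ρ k / 2)) := hE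
    _ ≤ R / 2 * Real.exp (L*T)
        + (Real.exp (L*T) * (S/2 * T) + Real.exp (4*L*T) * (S/2 * T)
          + Real.exp (4*L*T) * (R/2 + S/2 * T)) := by
        have h1 := mul_le_mul_of_nonneg_left hρsum hexp4.le
        have h2 := mul_le_mul_of_nonneg_right (by linarith : ρ 0 / 2 ≤ R / 2) hexp1.le
        linarith
    _ ≤ (1/2) * Real.exp (L*T) * R + (1/Real.sqrt 2) * T * Real.exp (L*T) *
          Real.sqrt (L*P*R) + Real.exp (4*L*T) * (R + T * S) := by
        have e1 : (1/Real.sqrt 2) * T * Real.exp (L*T) * Real.sqrt (L*P*R)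
            = Real.exp (L*T) * (S/2 * T) := by
          rw [show (1/Real.sqrt 2) * T * Real.exp (L*T) * Real.sqrt (L*P*R)
            = ((1/Real.sqrt 2) * Real.sqrt (L*P*R)) * T * Real.exp (L*T) by ring, hSval]
          ring
        rw [e1]
        have h3 : Real.exp (4*L*T) * (S/2 * T + (R/2 + S/2 * T))
            ≤ Real.exp (4*L*T) * (R + T * S) :=
          mul_le_mul_of_nonneg_left (by linarith) hexp4.le
        linarith
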